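/- Let $c:\mathbb{R}\to(0,\infty)$ be of the form $c(t)=e^{\int_0^t a(s)\,ds}$ with $a:\mathbb{R}\to\mathbb{R}$ continuous and bounded. If for some $\beta>0$ the function $t\mapsto c(t)^{\beta}$ is integrable on $(-\infty,0]$, then $\lim_{t\to-\infty}c(t)=0$. -/

import Mathlib

open MeasureTheory Set Filter

theorem stmt3 (a : ℝ → ℝ) (hcont : Continuous a) (hbdd : ∃ M, ∀ t, |a t| ≤ M)
    (c : ℝ → ℝ) (hc : ∀ t, c t = Real.exp (∫ s in (0:ℝ)..t, a s))
    (β : ℝ) (hβ : 0 < β)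
    (hint : IntegrableOn (fun t => c t ^ β) (Iic 0)) :
    Tendsto c atBot (nhds 0) := by
  obtain ⟨M, hM⟩ := hbdd
  have hM0 : 0 ≤ M := (abs_nonneg (a 0)).trans (hM 0)
  set f : ℝ → ℝ := fun t => ∫ s in (0:ℝ)..t, a s with hfdef
  have hfc : Continuous f :=
    intervalIntegral.continuous_primitive (fun x y => hcont.intervalIntegrable x y) 0
  have hcpos : ∀ t, 0 < c t := fun t => by rw [hc]; exact Real.exp_pos _
  -- Lipschitz bound
  have hlip : ∀ x y : ℝ, |f y - f x| ≤ M * |y - x| := by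
    intro x y
    have : f y - f x = ∫ s in x..y, a s := by
      rw [hfdef]
      simp only
      rw [intervalIntegral.integral_interval_sub_left (hcont.intervalIntegrable 0 y)
        (hcont.intervalIntegrable 0 x)]
    rw [this, ← Real.norm_eq_abs]
    exact intervalIntegral.norm_integral_le_of_norm_le_const (fun s _ => hM s)
  -- g = c ^ β
  have hg : ∀ t, c t ^ β = Real.exp (f t * β) := fun t => by
    rw [hc, ← Real.exp_mul]
  have hgpos : ∀ t, 0 < c t ^ β := fun t => (hg t) ▸ Real.exp_pos _
  have hgcont : Continuous fun t => c t ^ β := by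
    have : (fun t => c t ^ β) = fun t => Real.exp (f t * β) := funext hg
    rw [this]; exact Real.continuous_exp.comp (hfc.mul continuous_const)
  -- tail integral tends to 0
  have hIicInt : ∀ t : ℝ, t ≤ 0 → IntegrableOn (fun x => c x ^ β) (Iic t) := fun t ht =>
    hint.mono_set (Iic_subset_Iic.2 ht)
  have htail : Tendsto (fun t => ∫ x in Iic t, c x ^ β) atBot (nhds 0) := by
    have hempty : (⋂ n : ℝ, Iic (-n)) = (∅ : Set ℝ) := by
      apply eq_empty_iff_forall_notMem.2
      intro x hx
      have h1 : x ≤ -(1 - x) := mem_iInter.1 hx (1 - x)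
      linarith
    have h := tendsto_setIntegral_of_antitone (μ := volume) (f := fun x => c x ^ β)
      (s := fun n : ℝ => Iic (-n)) (fun n => measurableSet_Iic)
      (fun i j hij => Iic_subset_Iic.2 (neg_le_neg hij))
      ⟨0, by simpa using hint⟩
    rw [hempty] at h
    simp only [Measure.restrict_empty, integral_zero_measure] at h
    have := h.comp tendsto_neg_atBot_atTop
    simpa only [Function.comp_def, neg_neg] using this
  -- key pointwise bound
  have hbound : ∀ t : ℝ, t ≤ -1 →
      c t ^ β ≤ Real.exp (M * β) * ∫ x in Iic (t + 1), c x ^ β := by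
    intro t ht
    have hsub : Icc t (t + 1) ⊆ Iic (t + 1) := fun x hx => hx.2
    have hIccInt : IntegrableOn (fun x => c x ^ β) (Icc t (t + 1)) :=
      hgcont.integrableOn_Icc
    have hkey : Real.exp ((f t - M) * β) * (volume (Icc t (t + 1))).toReal
        ≤ ∫ x in Icc t (t + 1), c x ^ β := by
      apply setIntegral_ge_of_const_le_real measurableSet_Icc
        (by simp [Real.volume_Icc])
      · intro x hx
        rw [hg]
        apply Real.exp_le_exp.2
        have h1 : |f x - f t| ≤ M * |x - t| := hlip t x
        have h2 : |x - t| ≤ 1 := by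
          rw [abs_le]; constructor <;> [linarith [hx.1]; linarith [hx.2]]
        have h3 : f t - M ≤ f x := by
          have := (abs_le.1 h1).1
          nlinarith [abs_nonneg (x - t)]
        nlinarith
      · exact hIccInt
    have hvol : (volume (Icc t (t + 1))).toReal = 1 := by
      simp [Real.volume_Icc]
    rw [hvol, mul_one] at hkey
    have hmono : ∫ x in Icc t (t + 1), c x ^ β ≤ ∫ x in Iic (t + 1), c x ^ β := by
      apply setIntegral_mono_set (hIicInt (t + 1) (by linarith))
        (Eventually.of_forall fun x => (hgpos x).le)
        (HasSubset.Subset.eventuallyLE hsub)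
    have h4 : Real.exp ((f t - M) * β) ≤ ∫ x in Iic (t + 1), c x ^ β :=
      hkey.trans hmono
    rw [hg]
    calc Real.exp (f t * β) = Real.exp (M * β) * Real.exp ((f t - M) * β) := by
          rw [← Real.exp_add]; ring_nf
      _ ≤ Real.exp (M * β) * ∫ x in Iic (t + 1), c x ^ β := by
          exact mul_le_mul_of_nonneg_left h4 (Real.exp_pos _).le
  -- squeeze
  have hsq : Tendsto (fun t => c t ^ β) atBot (nhds 0) := by
    have hrhs : Tendsto (fun t : ℝ => Real.exp (M * β) * ∫ x in Iic (t + 1), c x ^ β)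
        atBot (nhds 0) := by
      have h1 : Tendsto (fun t : ℝ => t + 1) atBot atBot := tendsto_atBot_add_const_right _ _ tendsto_id
      have := (htail.comp h1).const_mul (Real.exp (M * β))
      simpa using this
    apply squeeze_zero' (Eventually.of_forall fun t => (hgpos t).le) ?_ hrhs
    filter_upwards [eventually_le_atBot (-1 : ℝ)] with t ht
    exact hbound t ht
  -- conclude
  have hceq : ∀ t, (c t ^ β) ^ β⁻¹ = c t := by
    intro t
    rw [← Real.rpow_mul (hcpos t).le, mul_inv_cancel₀ hβ.ne', Real.rpow_one]
  have : Tendsto (fun t => (c t ^ β) ^ β⁻¹) atBot (nhds ((0:ℝ) ^ β⁻¹)) :=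
    hsq.rpow_const (Or.inr (inv_nonneg.2 hβ.le))
  rw [Real.zero_rpow (inv_ne_zero hβ.ne')] at this
  exact this.congr hceq
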